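/- For symmetric negative definite n×n matrices the function X ↦ tr(X⁻¹) is concave: for negative definite X, Y and θ ∈ [0,1], tr((θX+(1-θ)Y)⁻¹) ≥ θ·tr(X⁻¹) + (1-θ)·tr(Y⁻¹). -/

import Mathlib

open Matrix

section aux

variable {n : ℕ}

lemma psd_trace_nonneg' {M : Matrix (Fin n) (Fin n) ℝ} (h : M.PosSemidef) :
    0 ≤ M.trace := by
  rw [Matrix.trace]
  apply Finset.sum_nonneg
  intro i _
  have := h.dotProduct_mulVec_nonneg (Pi.single i 1)
  simpa [Matrix.mulVec_single, Matrix.diag] using this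

lemma key_ineq {A N : Matrix (Fin n) (Fin n) ℝ} (hA : A.PosDef)
    (hN : N.IsHermitian) :
    2 * N.trace - (N * A * N).trace ≤ A⁻¹.trace := by
  have hdet : IsUnit A.det := hA.det_pos.ne'.isUnit
  have hAinv : A * A⁻¹ = 1 := Matrix.mul_nonsing_inv A hdet
  have hinvA : A⁻¹ * A = 1 := Matrix.nonsing_inv_mul A hdet
  have hpsd : ((N - A⁻¹)ᴴ * A * (N - A⁻¹)).PosSemidef :=
    hA.posSemidef.conjTranspose_mul_mul_same (N - A⁻¹)
  have hHerm : (N - A⁻¹)ᴴ = N - A⁻¹ := by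
    rw [conjTranspose_sub, hN.eq, hA.isHermitian.inv.eq]
  have hexp : (N - A⁻¹)ᴴ * A * (N - A⁻¹) = N * A * N - N - N + A⁻¹ := by
    rw [hHerm]
    have : (N - A⁻¹) * A * (N - A⁻¹)
        = N * A * N - N * (A * A⁻¹) - (A⁻¹ * A) * N + A⁻¹ * (A * A⁻¹) := by
      noncomm_ring
    rw [this, hAinv, hinvA]
    simp
  have := psd_trace_nonneg' hpsd
  rw [hexp] at this
  simp only [Matrix.trace_add, Matrix.trace_sub] at this
  linarith

end aux

/-- `X ↦ tr (X⁻¹)` is concave on symmetric negative definite matrices. -/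
theorem trace_inv_concave_negDef {n : ℕ} (X Y : Matrix (Fin n) (Fin n) ℝ)
    (hXs : X.IsSymm) (hYs : Y.IsSymm) (hX : (-X).PosDef) (hY : (-Y).PosDef)
    (θ : ℝ) (hθ0 : 0 ≤ θ) (hθ1 : θ ≤ 1) :
    θ * (X⁻¹).trace + (1 - θ) * (Y⁻¹).trace ≤ ((θ • X + (1 - θ) • Y)⁻¹).trace := by
  set A := -X with hA
  set B := -Y with hB
  -- M is the convex combination of posdef matrices
  set M := θ • A + (1 - θ) • B with hM
  have hMdef : M.PosDef := by
    rw [Matrix.posDef_iff_dotProduct_mulVec]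
    constructor
    · rw [hM]
      simp only [Matrix.IsHermitian, Matrix.conjTranspose_add, Matrix.conjTranspose_smul,
        hX.isHermitian.eq, hY.isHermitian.eq, star_trivial]
    · intro x hx
      have h1 := hX.dotProduct_mulVec_pos hx
      have h2 := hY.dotProduct_mulVec_pos hx
      have h1' := hY.posSemidef.dotProduct_mulVec_nonneg x
      have h2' := hX.posSemidef.dotProduct_mulVec_nonneg x
      simp only [hM, Matrix.add_mulVec, Matrix.smul_mulVec, dotProduct_add,
        dotProduct_smul, smul_eq_mul, RCLike.re_to_real] at *
      rcases lt_or_eq_of_le hθ0 with hpos | hzero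
      · have : 0 ≤ (1 - θ) * (star x ⬝ᵥ B *ᵥ x) := mul_nonneg (by linarith) h1'
        have : 0 < θ * (star x ⬝ᵥ A *ᵥ x) := mul_pos hpos h1
        linarith
      · have : θ = 0 := hzero.symm
        subst this
        simpa using h2
  have hdetM : IsUnit M.det := hMdef.det_pos.ne'.isUnit
  have hdetA : IsUnit A.det := hX.det_pos.ne'.isUnit
  have hdetB : IsUnit B.det := hY.det_pos.ne'.isUnit
  set N := M⁻¹ with hN
  have hNh : N.IsHermitian := hMdef.isHermitian.inv
  have hMinv : M * N = 1 := Matrix.mul_nonsing_inv M hdetM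
  have hinvM : N * M = 1 := Matrix.nonsing_inv_mul M hdetM
  -- N * M * N = N
  have hNMN : N * M * N = N := by rw [hinvM, Matrix.one_mul]
  -- convexity for posdef matrices
  have keyA := key_ineq hX hNh
  have keyB := key_ineq hY hNh
  have hsplit : N * M * N = θ • (N * A * N) + (1 - θ) • (N * B * N) := by
    rw [hM]
    simp [Matrix.mul_add, Matrix.add_mul, Matrix.mul_smul, Matrix.smul_mul]
  have htr : N.trace = θ * (N * A * N).trace + (1 - θ) * (N * B * N).trace := by
    conv_lhs => rw [← hNMN]
    rw [hsplit, Matrix.trace_add, Matrix.trace_smul, Matrix.trace_smul]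
    simp [smul_eq_mul]
  have hconv : N.trace ≤ θ * A⁻¹.trace + (1 - θ) * B⁻¹.trace := by
    have h1 : θ * (2 * N.trace - (N * A * N).trace) ≤ θ * A⁻¹.trace :=
      mul_le_mul_of_nonneg_left keyA hθ0
    have h2 : (1 - θ) * (2 * N.trace - (N * B * N).trace) ≤ (1 - θ) * B⁻¹.trace :=
      mul_le_mul_of_nonneg_left keyB (by linarith)
    nlinarith [htr]
  -- translate back to X, Y
  have hXinv : X⁻¹ = -(A⁻¹) := by
    apply Matrix.inv_eq_right_inv
    have : X = -A := by simp [hA]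
    rw [this, neg_mul_neg, Matrix.mul_nonsing_inv A hdetA]
  have hYinv : Y⁻¹ = -(B⁻¹) := by
    apply Matrix.inv_eq_right_inv
    have : Y = -B := by simp [hB]
    rw [this, neg_mul_neg, Matrix.mul_nonsing_inv B hdetB]
  have hcomb : θ • X + (1 - θ) • Y = -M := by
    rw [hM, hA, hB]
    module
  have hMinv' : (θ • X + (1 - θ) • Y)⁻¹ = -N := by
    rw [hcomb]
    apply Matrix.inv_eq_right_inv
    rw [neg_mul_neg, hMinv]
  rw [hXinv, hYinv, hMinv', Matrix.trace_neg, Matrix.trace_neg, Matrix.trace_neg]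
  linarith
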